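/- arXiv:1405.6699 — 2 statements merged into one kernel-verified Lean document; each statement's English description precedes it below -/
import Mathlib

section
/- Let F = F_{ξη}[A] = (A*, R) be a tree frame (ξ ∈ {i, r}, η ∈ {n, t}) with 0 ∉ A. Then the zero-forgetting map f_F is a bounded morphism from the neighborhood frame N_ω(F) onto the neighborhood frame N(F). -/
set_option autoImplicit false

/-- Modal formulas with `n` modalities (propositional letters indexed by `ℕ`). -/
inductive MFormula (n : ℕ) : Type
  | prop : ℕ → MFormula n
  | bot  : MFormula n
  | imp  : MFormula n → MFormula n → MFormula n
  | box  : Fin n → MFormula n → MFormula n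

namespace MFormula

/-- Negation as an abbreviation: ¬φ := φ → ⊥. -/
def neg {n : ℕ} (φ : MFormula n) : MFormula n := φ.imp .bot

/-- Uniform substitution of formulas for propositional letters. -/
def subst {n : ℕ} (s : ℕ → MFormula n) : MFormula n → MFormula n
  | prop p  => s p
  | bot     => bot
  | imp φ ψ => imp (φ.subst s) (ψ.subst s)
  | box i φ => box i (φ.subst s)

end MFormula

/-- A classical tautology: true under every boolean valuation of formulas
(a valuation respecting `⊥` and `→`, arbitrary on letters and boxed formulas). -/
def IsTautology {n : ℕ} (φ : MFormula n) : Prop :=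
  ∀ v : MFormula n → Prop,
    ¬ v .bot → (∀ ψ χ : MFormula n, v (ψ.imp χ) ↔ (v ψ → v χ)) → v φ

/-- Normal modal logics with `n` modalities. -/
structure IsNormalLogic {n : ℕ} (L : Set (MFormula n)) : Prop where
  taut : ∀ φ : MFormula n, IsTautology φ → φ ∈ L
  kax : ∀ (i : Fin n) (p q : MFormula n),
    ((MFormula.box i (p.imp q)).imp ((MFormula.box i p).imp (MFormula.box i q))) ∈ L
  mp : ∀ φ ψ : MFormula n, φ.imp ψ ∈ L → φ ∈ L → ψ ∈ L
  subst : ∀ (φ : MFormula n) (s : ℕ → MFormula n), φ ∈ L → φ.subst s ∈ L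
  nec : ∀ (i : Fin n) (φ : MFormula n), φ ∈ L → MFormula.box i φ ∈ L

/-- The smallest normal logic containing `Γ`. -/
def NormalClosure {n : ℕ} (Γ : Set (MFormula n)) : Set (MFormula n) :=
  ⋂₀ {L : Set (MFormula n) | IsNormalLogic L ∧ Γ ⊆ L}

/-- The axiom □p → ¬□¬p. -/
def dAx : MFormula 1 :=
  (MFormula.box 0 (.prop 0)).imp (MFormula.neg (MFormula.box 0 (MFormula.neg (.prop 0))))

/-- The axiom □p → p. -/
def tAx : MFormula 1 := (MFormula.box 0 (.prop 0)).imp (.prop 0)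

/-- The axiom □p → □□p. -/
def fourAx : MFormula 1 :=
  (MFormula.box 0 (.prop 0)).imp (MFormula.box 0 (MFormula.box 0 (.prop 0)))

def LogicK : Set (MFormula 1) := NormalClosure ∅
def LogicD : Set (MFormula 1) := NormalClosure (LogicK ∪ {dAx})
def LogicT : Set (MFormula 1) := NormalClosure (LogicK ∪ {tAx})
def LogicD4 : Set (MFormula 1) := NormalClosure (LogicD ∪ {fourAx})
def LogicS4 : Set (MFormula 1) := NormalClosure (LogicT ∪ {fourAx})

/-- Translation of a unimodal formula into the bimodal language, replacing □ by □_i. -/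
def trTo (i : Fin 2) : MFormula 1 → MFormula 2
  | .prop p  => .prop p
  | .bot     => .bot
  | .imp φ ψ => .imp (trTo i φ) (trTo i ψ)
  | .box _ φ => .box i (trTo i φ)

/-- The fusion `L₁ ⊗ L₂` of two unimodal logics: the smallest bimodal normal logic
containing the translation of `L₁` (□ ↦ □₁) and of `L₂` (□ ↦ □₂). -/
def Fusion (L₁ L₂ : Set (MFormula 1)) : Set (MFormula 2) :=
  NormalClosure (trTo 0 '' L₁ ∪ trTo 1 '' L₂)

/-- Truth in a Kripke model. -/
def kSat {n : ℕ} {W : Type} (R : Fin n → W → W → Prop) (V : ℕ → Set W) :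
    W → MFormula n → Prop
  | w, .prop p  => w ∈ V p
  | _, .bot     => False
  | w, .imp φ ψ => kSat R V w φ → kSat R V w ψ
  | w, .box i φ => ∀ v : W, R i w v → kSat R V v φ

/-- The logic of a Kripke `n`-frame. -/
def KLogn {n : ℕ} {W : Type} [Nonempty W] (R : Fin n → W → W → Prop) :
    Set (MFormula n) :=
  {φ | ∀ (V : ℕ → Set W) (w : W), kSat R V w φ}

/-- The logic of a unimodal Kripke frame. -/
def KLog {W : Type} [Nonempty W] (R : W → W → Prop) : Set (MFormula 1) :=
  KLogn (fun _ => R)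

/-- The logic of a bimodal Kripke frame. -/
def KLog2 {W : Type} [Nonempty W] (R₁ R₂ : W → W → Prop) : Set (MFormula 2) :=
  KLogn ![R₁, R₂]

/-- Truth in a (monotone) neighborhood model: `x ⊨ □_i φ` iff the truth set of `φ`
belongs to the filter `τ i x`. -/
def nSat {n : ℕ} {X : Type} (τ : Fin n → X → Filter X) (V : ℕ → Set X) :
    X → MFormula n → Prop
  | x, .prop p  => x ∈ V p
  | _, .bot     => False
  | x, .imp φ ψ => nSat τ V x φ → nSat τ V x ψ
  | x, .box i φ => {y | nSat τ V y φ} ∈ τ i x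

/-- The logic of a neighborhood `n`-frame. -/
def NLogn {n : ℕ} {X : Type} [Nonempty X] (τ : Fin n → X → Filter X) :
    Set (MFormula n) :=
  {φ | ∀ (V : ℕ → Set X) (x : X), nSat τ V x φ}

/-- The logic of a unimodal neighborhood frame. -/
def NLog {X : Type} [Nonempty X] (τ : X → Filter X) : Set (MFormula 1) :=
  NLogn (fun _ => τ)

/-- The logic of a neighborhood 2-frame. -/
def NLog2 {X : Type} [Nonempty X] (τ₁ τ₂ : X → Filter X) : Set (MFormula 2) :=
  NLogn ![τ₁, τ₂]

/-- Validity of a unimodal formula in a neighborhood frame. -/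
def NValid {X : Type} (τ : X → Filter X) (φ : MFormula 1) : Prop :=
  ∀ (V : ℕ → Set X) (x : X), nSat (fun _ => τ) V x φ

/-- The neighborhood frame `N(F)` of a Kripke frame `F = (W, R)`:
`τ(w)` is the principal filter of `R(w)`. -/
def nOfK {W : Type} (R : W → W → Prop) (w : W) : Filter W :=
  Filter.principal {v | R w v}

/-- Bounded morphisms between neighborhood frames (with neighborhood functions
indexed by `ι`). -/
def IsNdMorphism {ι X Y : Type} (τ : ι → X → Filter X) (σ : ι → Y → Filter Y)
    (f : X → Y) : Prop :=
  Function.Surjective f ∧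
    ∀ (i : ι) (x : X),
      (∀ U ∈ τ i x, f '' U ∈ σ i (f x)) ∧
      (∀ V ∈ σ i (f x), ∃ U ∈ τ i x, f '' U ⊆ V)

/-- First neighborhood function of the product of two neighborhood frames:
`U ∈ τ'_1(x₁,x₂)` iff `∃ V ∈ τ₁ x₁, V × {x₂} ⊆ U`. -/
def prodTau1 {X₁ X₂ : Type} (τ₁ : X₁ → Filter X₁) (p : X₁ × X₂) :
    Filter (X₁ × X₂) :=
  (τ₁ p.1).map (fun x => (x, p.2))

/-- Second neighborhood function of the product of two neighborhood frames:
`U ∈ τ'_2(x₁,x₂)` iff `∃ V ∈ τ₂ x₂, {x₁} × V ⊆ U`. -/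
def prodTau2 {X₁ X₂ : Type} (τ₂ : X₂ → Filter X₂) (p : X₁ × X₂) :
    Filter (X₁ × X₂) :=
  (τ₂ p.2).map (fun y => (p.1, y))

/-- The successor relation on finite sequences: `a R b` iff `b = a·x` for some `x ∈ A`. -/
def sucRel (A : Type) (a b : List A) : Prop := ∃ x : A, b = a ++ [x]

/-- The four kinds of tree frames: irreflexive/reflexive, non-transitive/transitive. -/
inductive TreeKind : Type
  | inn  -- irreflexive non-transitive: F_in
  | rn   -- reflexive non-transitive: F_rn (reflexive closure)
  | itr  -- irreflexive transitive: F_it (transitive closure)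
  | rt   -- reflexive transitive: F_rt (reflexive-transitive closure)

/-- The relation of the tree frame `F_{ξη}[A]` on `A*`. -/
def treeRel (A : Type) : TreeKind → List A → List A → Prop
  | .inn => sucRel A
  | .rn  => fun a b => a = b ∨ sucRel A a b
  | .itr => Relation.TransGen (sucRel A)
  | .rt  => Relation.ReflTransGen (sucRel A)

/-- First relation of the product frame `F₁ ⊗ F₂` on `(A ⊔ B)*`:
`x R'_1 y` iff `y = x·z` for some `z ∈ A*` with `Λ R₁ z`. -/
def prodRel1 (A B : Type) (k : TreeKind) (x y : List (A ⊕ B)) : Prop :=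
  ∃ z : List A, treeRel A k [] z ∧ y = x ++ z.map Sum.inl

/-- Second relation of the product frame `F₁ ⊗ F₂` on `(A ⊔ B)*`. -/
def prodRel2 (A B : Type) (k : TreeKind) (x y : List (A ⊕ B)) : Prop :=
  ∃ z : List B, treeRel B k [] z ∧ y = x ++ z.map Sum.inr

/-- Pseudo-infinite sequences over `A ∪ {0}` (with `0` modelled by `none`, so
automatically `0 ∉ A`) that are eventually `0`. -/
def PSeq (A : Type) : Type :=
  {α : ℕ → Option A // ∃ N, ∀ k ≥ N, α k = none}

instance {A : Type} : Nonempty (PSeq A) := ⟨⟨fun _ => none, 0, fun _ _ => rfl⟩⟩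

/-- `st(α)`: the least `N` such that `α` has only zeros from position `N` on. -/
noncomputable def PSeq.st {A : Type} (α : PSeq A) : ℕ :=
  sInf {N | ∀ k ≥ N, α.1 k = none}

/-- `f_F(α)`: the finite sequence obtained from `α` by deleting all zeros. -/
noncomputable def PSeq.forget {A : Type} (α : PSeq A) : List A :=
  ((List.range α.st).map α.1).reduceOption

/-- The basic neighborhood `U_k(α)` of `α`, relative to the relation `R` on `A*`:
`{β ∈ X : α|_m = β|_m and f_F(α) R f_F(β)}` where `m = max(k, st(α))`. -/
def Unbhd {A : Type} (R : List A → List A → Prop) (k : ℕ) (α : PSeq A) :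
    Set (PSeq A) :=
  {β | (∀ i < max k α.st, α.1 i = β.1 i) ∧ R α.forget β.forget}

/-- The neighborhood function of `N_ω(F)`: `τ(α)` is the filter generated by the
base `{U_k(α) : k ∈ ℕ}`. -/
noncomputable def nOmega {A : Type} (R : List A → List A → Prop) (α : PSeq A) :
    Filter (PSeq A) :=
  ⨅ k : ℕ, Filter.principal (Unbhd R k α)

/-- The interleaving `x₁ y₁ x₂ y₂ …` of two pseudo-infinite sequences. -/
def interleave {A B : Type} (α : PSeq A) (β : PSeq B) : PSeq (A ⊕ B) :=
  ⟨fun n => if n % 2 = 0 then (α.1 (n / 2)).map Sum.inl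
            else (β.1 (n / 2)).map Sum.inr, by
    obtain ⟨N₁, h₁⟩ := α.2
    obtain ⟨N₂, h₂⟩ := β.2
    refine ⟨2 * max N₁ N₂, fun k hk => ?_⟩
    have hdiv : max N₁ N₂ ≤ k / 2 := by omega
    by_cases h : k % 2 = 0
    · simp [h, h₁ (k / 2) (le_trans (le_max_left _ _) hdiv)]
    · simp [h, h₂ (k / 2) (le_trans (le_max_right _ _) hdiv)]⟩

/-- The map `g`: delete all zeros from the interleaving of `α` and `β`. -/
noncomputable def gMap {A B : Type} (p : PSeq A × PSeq B) : List (A ⊕ B) :=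
  (interleave p.1 p.2).forget


section Aux

variable {A : Type}

lemma reduceOption_eq_nil_of_none : ∀ l : List (Option A), (∀ x ∈ l, x = none) → l.reduceOption = []
  | [], _ => rfl
  | (a :: l), h => by
    have := h a List.mem_cons_self
    subst this
    simpa [List.reduceOption] using reduceOption_eq_nil_of_none l (fun x hx => h x (List.mem_cons_of_mem _ hx))

lemma PSeq.st_spec (α : PSeq A) : ∀ k ≥ α.st, α.1 k = none :=
  Nat.sInf_mem α.2

lemma PSeq.st_le (α : PSeq A) {N : ℕ} (h : ∀ k ≥ N, α.1 k = none) : α.st ≤ N :=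
  Nat.sInf_le h

lemma PSeq.forget_eq (α : PSeq A) {N : ℕ} (h : ∀ k ≥ N, α.1 k = none) :
    α.forget = ((List.range N).map α.1).reduceOption := by
  have hle := α.st_le h
  obtain ⟨d, rfl⟩ := Nat.exists_eq_add_of_le hle
  unfold PSeq.forget
  rw [List.range_add, List.map_append, List.reduceOption_append]
  have h2 : ((List.map (fun x => α.st + x) (List.range d)).map α.1).reduceOption = [] := by
    apply reduceOption_eq_nil_of_none
    intro x hx
    simp only [List.mem_map, List.mem_range] at hx
    obtain ⟨_, ⟨i, _, rfl⟩, rfl⟩ := hx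
    exact α.st_spec _ (Nat.le_add_right _ _)
  rw [h2, List.append_nil]

/-- Modify `α` by placing list `z` starting at position `m` (and zeros beyond). -/
def pmk (α : PSeq A) (m : ℕ) (z : List A) : PSeq A :=
  ⟨fun n => if n < m then α.1 n else z[n - m]?,
   ⟨m + z.length, fun k hk => by
      show (if k < m then α.1 k else z[k - m]?) = none
      rw [if_neg (by omega : ¬ k < m)]
      exact List.getElem?_eq_none (by omega)⟩⟩

lemma pmk_apply (α : PSeq A) (m : ℕ) (z : List A) (n : ℕ) :
    (pmk α m z).1 n = if n < m then α.1 n else z[n - m]? := rfl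

lemma pmk_forget (α : PSeq A) {m : ℕ} (hm : α.st ≤ m) (z : List A) :
    (pmk α m z).forget = α.forget ++ z := by
  have h1 : ∀ k ≥ m + z.length, (pmk α m z).1 k = none := fun k hk => by
    rw [pmk_apply, if_neg (by omega : ¬ k < m)]
    exact List.getElem?_eq_none (by omega)
  rw [(pmk α m z).forget_eq h1,
      α.forget_eq (fun k hk => α.st_spec k (le_trans hm hk)),
      List.range_add, List.map_append, List.reduceOption_append]
  congr 1
  · congr 1
    apply List.map_congr_left
    intro i hi
    simp only [List.mem_range] at hi
    rw [pmk_apply, if_pos hi]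
  · have : (List.map (fun x => m + x) (List.range z.length)).map (pmk α m z).1
        = z.map some := by
      apply List.ext_getElem
      · simp
      · intro i h₁ h₂
        simp only [List.getElem_map, List.getElem_range, pmk_apply, if_neg (by omega : ¬ m + i < m)]
        simp only [List.length_map, List.length_range] at h₁
        rw [Nat.add_sub_cancel_left, List.getElem?_eq_getElem h₁]
    rw [this]
    induction z with
    | nil => rfl
    | cons a l ih => simp [List.reduceOption, ih]

lemma treeRel_prefix (tk : TreeKind) {a b : List A} (h : treeRel A tk a b) :
    ∃ z, b = a ++ z := by
  cases tk with
  | inn => obtain ⟨x, rfl⟩ := h; exact ⟨[x], rfl⟩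
  | rn =>
    rcases h with rfl | ⟨x, rfl⟩
    exacts [⟨[], (List.append_nil a).symm⟩, ⟨[x], rfl⟩]
  | itr =>
    induction h with
    | single h => obtain ⟨x, rfl⟩ := h; exact ⟨[x], rfl⟩
    | tail _ h ih =>
      obtain ⟨z, rfl⟩ := ih; obtain ⟨x, rfl⟩ := h; exact ⟨z ++ [x], by simp⟩
  | rt =>
    induction h with
    | refl => exact ⟨[], (List.append_nil a).symm⟩
    | tail _ h ih =>
      obtain ⟨z, rfl⟩ := ih; obtain ⟨x, rfl⟩ := h; exact ⟨z ++ [x], by simp⟩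

lemma Unbhd_anti (R : List A → List A → Prop) {k k' : ℕ} (h : k ≤ k') (α : PSeq A) :
    Unbhd R k' α ⊆ Unbhd R k α := by
  rintro β ⟨h1, h2⟩
  exact ⟨fun i hi => h1 i (lt_of_lt_of_le hi (max_le_max h le_rfl)), h2⟩

lemma mem_nOmega_iff (R : List A → List A → Prop) (α : PSeq A) (U : Set (PSeq A)) :
    U ∈ nOmega R α ↔ ∃ k, Unbhd R k α ⊆ U := by
  have hd : Directed (· ≥ ·) (fun k => Filter.principal (Unbhd R k α)) := by
    intro k k'
    exact ⟨max k k', Filter.principal_mono.mpr (Unbhd_anti R (le_max_left _ _) α),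
      Filter.principal_mono.mpr (Unbhd_anti R (le_max_right _ _) α)⟩
  rw [nOmega, Filter.mem_iInf_of_directed hd]
  simp [Filter.mem_principal]

end Aux

/-- The zero-forgetting map `f_F` is a bounded morphism from the
neighborhood frame `N_ω(F)` onto the neighborhood frame `N(F)`. -/
theorem forget_boundedMorphism (A : Type) [Nonempty A] (tk : TreeKind) :
    IsNdMorphism (fun _ : Fin 1 => nOmega (treeRel A tk))
      (fun _ : Fin 1 => nOfK (treeRel A tk)) PSeq.forget := by
  constructor
  · -- surjectivity
    intro b
    set α0 : PSeq A := ⟨fun _ => none, 0, fun _ _ => rfl⟩ with hα0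
    have hst : α0.st ≤ 0 := α0.st_le (N := 0) (fun _ _ => rfl)
    refine ⟨pmk α0 0 b, ?_⟩
    rw [pmk_forget α0 hst b, α0.forget_eq (N := 0) (fun _ _ => rfl)]
    simp
  · intro i α
    constructor
    · intro U hU
      simp only [nOfK, Filter.mem_principal]
      obtain ⟨k, hk⟩ := (mem_nOmega_iff _ α U).mp hU
      rintro b hb
      obtain ⟨z, rfl⟩ := treeRel_prefix tk hb
      have hm : α.st ≤ max k α.st := le_max_right _ _
      have hmem : pmk α (max k α.st) z ∈ Unbhd (treeRel A tk) k α := by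
        refine ⟨fun j hj => ?_, ?_⟩
        · rw [pmk_apply, if_pos hj]
        · rw [pmk_forget α hm z]; exact hb
      exact ⟨pmk α (max k α.st) z, hk hmem, pmk_forget α hm z⟩
    · intro V hV
      simp only [nOfK, Filter.mem_principal] at hV
      refine ⟨Unbhd (treeRel A tk) 0 α, Filter.mem_iInf_of_mem 0 (Filter.mem_principal_self _), ?_⟩
      rintro _ ⟨β, hβ, rfl⟩
      exact hV hβ.2
end

section
/- Let A and B be disjoint nonempty sets with 0 ∉ A ∪ B, F_1 = F_{ξ1η1}[A] = (A*, R_1) and F_2 = F_{ξ2η2}[B] = (B*, R_2) tree frames. Define g on the product frame N_ω(F_1) × N_ω(F_2) by: for pseudo-infinite sequences α = x_1 x_2 … and β = y_1 y_2 …, g(α, β) is the finite sequence obtained by deleting all zeros from the interleaving x_1 y_1 x_2 y_2 …. Then g is a bounded morphism from the neighborhood 2-frame N_ω(F_1) × N_ω(F_2) onto the neighborhood 2-frame N(F_1 ⊗ F_2). -/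
set_option autoImplicit false

namespace GAux
open List

variable {A B C : Type}

lemma flatten_toList (l : List (Option C)) :
    (l.map Option.toList).flatten = l.reduceOption := by
  induction l with
  | nil => simp
  | cons a t ih => cases a <;> simp [ih]

lemma flatten_getElem (w : List C) :
    ((List.range w.length).map (fun j => w[j]?.toList)).flatten = w := by
  induction w with
  | nil => simp
  | cons c t ih =>
    rw [List.length_cons, List.range_succ_eq_map]
    simp only [List.map_cons, List.map_map]
    have h : ((fun j => ((c :: t)[j]?).toList) ∘ Nat.succ) = fun j => (t[j]?).toList := by
      funext j; simp
    rw [h]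
    simpa using ih

lemma red_getElem (z : List C) :
    ((List.range z.length).map (fun j => z[j]?)).reduceOption = z := by
  rw [← flatten_toList, List.map_map]
  exact flatten_getElem z

lemma red_nil {l : List (Option C)} (h : ∀ x ∈ l, x = none) : l.reduceOption = [] := by
  induction l with
  | nil => rfl
  | cons a t ih =>
    rw [h a (by simp)]
    simpa using ih (fun x hx => h x (by simp [hx]))

lemma ilv_red (g h : ℕ → Option C) (n : ℕ) :
    ((List.range (2*n)).map (fun i => if i % 2 = 0 then g (i/2) else h (i/2))).reduceOption
      = ((List.range n).map (fun j => (g j).toList ++ (h j).toList)).flatten := by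
  induction n with
  | zero => simp
  | succ n ih =>
    have h2 : 2 * (n+1) = (2*n + 1) + 1 := by ring
    rw [h2, List.range_succ, List.range_succ, List.range_succ]
    simp only [List.map_append, List.map_cons, List.map_nil, List.reduceOption_append,
      List.flatten_append, List.flatten_cons, List.flatten_nil]
    rw [ih]
    have e1 : (2*n) % 2 = 0 := by omega
    have e2 : (2*n)/2 = n := by omega
    have e3 : ¬ ((2*n+1) % 2 = 0) := by omega
    have e4 : (2*n+1)/2 = n := by omega
    rw [if_pos e1, if_neg e3, e2, e4]
    cases g n <;> cases h n <;> simp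

lemma st_spec (α : PSeq A) : ∀ k ≥ α.st, α.1 k = none :=
  Nat.sInf_mem (s := {N | ∀ k ≥ N, α.1 k = none}) α.2

lemma st_le (α : PSeq A) {N : ℕ} (h : ∀ k ≥ N, α.1 k = none) : α.st ≤ N :=
  Nat.sInf_le h

lemma forget_bound (α : PSeq A) {N : ℕ} (h : ∀ k ≥ N, α.1 k = none) :
    α.forget = ((List.range N).map α.1).reduceOption := by
  have hst := st_le α h
  unfold PSeq.forget
  rw [show N = α.st + (N - α.st) by omega, List.range_add, List.map_append,
    List.reduceOption_append, List.map_map]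
  rw [red_nil (l := (List.range (N - α.st)).map (α.1 ∘ fun x => α.st + x)) ?_, List.append_nil]
  intro x hx
  simp only [List.mem_map, List.mem_range] at hx
  obtain ⟨j, _, rfl⟩ := hx
  exact st_spec α _ (Nat.le_add_right _ _)

lemma gMap_eq (α : PSeq A) (β : PSeq B) {M : ℕ} (hα : α.st ≤ M) (hβ : β.st ≤ M) :
    gMap (α, β) = ((List.range M).map
      (fun j => ((α.1 j).map Sum.inl).toList ++ ((β.1 j).map Sum.inr).toList)).flatten := by
  unfold gMap
  rw [forget_bound (interleave α β) (N := 2*M) ?_]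
  · rw [show ((List.range (2*M)).map (interleave α β).1)
        = (List.range (2*M)).map (fun i => if i % 2 = 0 then ((α.1 (i/2)).map Sum.inl)
            else ((β.1 (i/2)).map Sum.inr)) from rfl]
    exact ilv_red (fun j => (α.1 j).map Sum.inl) (fun j => (β.1 j).map Sum.inr) M
  · intro k hk
    show (if k % 2 = 0 then (α.1 (k/2)).map Sum.inl else (β.1 (k/2)).map Sum.inr) = none
    have hM : M ≤ k / 2 := by omega
    by_cases h : k % 2 = 0
    · simp [h, st_spec α _ (le_trans hα hM)]
    · simp [h, st_spec β _ (le_trans hβ hM)]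

lemma sucRel_shift (a : List A) {u v : List A} (h : sucRel A u v) :
    sucRel A (a ++ u) (a ++ v) := by
  obtain ⟨x, rfl⟩ := h; exact ⟨x, by simp⟩

lemma treeRel_append {k : TreeKind} {a z : List A} (h : treeRel A k [] z) :
    treeRel A k a (a ++ z) := by
  cases k with
  | inn => obtain ⟨x, rfl⟩ := h; exact ⟨x, by simp⟩
  | rn =>
    rcases h with h | ⟨x, rfl⟩
    · left; simp [← h]
    · right; exact ⟨x, by simp⟩
  | itr =>
    simpa [Function.onFun, treeRel] using Relation.TransGen.lift (fun u => a ++ u) (fun u v hh => sucRel_shift a hh) _ _ h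
  | rt =>
    simpa [Function.onFun, treeRel] using Relation.ReflTransGen.lift (fun u => a ++ u) (fun u v hh => sucRel_shift a hh) _ _ h

lemma treeRel_dest {k : TreeKind} {a b : List A} (h : treeRel A k a b) :
    ∃ z, treeRel A k [] z ∧ b = a ++ z := by
  cases k with
  | inn => obtain ⟨x, rfl⟩ := h; exact ⟨[x], ⟨x, rfl⟩, rfl⟩
  | rn =>
    rcases h with rfl | ⟨x, rfl⟩
    · exact ⟨[], Or.inl rfl, by simp⟩
    · exact ⟨[x], Or.inr ⟨x, rfl⟩, rfl⟩
  | itr =>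
    induction h with
    | single h => obtain ⟨x, rfl⟩ := h; exact ⟨[x], Relation.TransGen.single ⟨x, rfl⟩, rfl⟩
    | tail hab h ih =>
      obtain ⟨z, hz, rfl⟩ := ih
      obtain ⟨x, rfl⟩ := h
      exact ⟨z ++ [x], Relation.TransGen.tail hz ⟨x, rfl⟩, by simp⟩
  | rt =>
    induction h with
    | refl => exact ⟨[], Relation.ReflTransGen.refl, by simp⟩
    | tail hab h ih =>
      obtain ⟨z, hz, rfl⟩ := ih
      obtain ⟨x, rfl⟩ := h
      exact ⟨z ++ [x], Relation.ReflTransGen.tail hz ⟨x, rfl⟩, by simp⟩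

lemma Unbhd_antitone (R : List A → List A → Prop) (α : PSeq A) {k k' : ℕ} (h : k ≤ k') :
    Unbhd R k' α ⊆ Unbhd R k α := by
  rintro β ⟨h1, h2⟩
  exact ⟨fun i hi => h1 i (lt_of_lt_of_le hi (max_le_max h le_rfl)), h2⟩

lemma mem_nOmega {R : List A → List A → Prop} {α : PSeq A} {s : Set (PSeq A)} :
    s ∈ nOmega R α ↔ ∃ k, Unbhd R k α ⊆ s := by
  rw [nOmega, Filter.mem_iInf_of_directed]
  · simp only [Filter.mem_principal]
  · intro k k'
    exact ⟨max k k', Filter.principal_mono.2 (Unbhd_antitone _ _ (le_max_left _ _)),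
      Filter.principal_mono.2 (Unbhd_antitone _ _ (le_max_right _ _))⟩

/-- Extension of `α` by the list `z` placed from position `M` on. -/
def ext (α : PSeq A) (M : ℕ) (z : List A) : PSeq A :=
  ⟨fun i => if i < M then α.1 i else z[i - M]?, ⟨M + z.length, fun k hk => by
    have h1 : ¬ k < M := by omega
    have h2 : z.length ≤ k - M := by omega
    simp [h1, List.getElem?_eq_none h2]⟩⟩

lemma ext_agree (α : PSeq A) (M : ℕ) (z : List A) {i : ℕ} (h : i < M) :
    (ext α M z).1 i = α.1 i := if_pos h

lemma forget_ext (α : PSeq A) {M : ℕ} (hα : α.st ≤ M) (z : List A) :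
    (ext α M z).forget = α.forget ++ z := by
  have hb : ∀ k ≥ M + z.length, (ext α M z).1 k = none := by
    intro k hk
    have h1 : ¬ k < M := by omega
    have h2 : z.length ≤ k - M := by omega
    simp [ext, h1, List.getElem?_eq_none h2]
  rw [forget_bound (ext α M z) hb, List.range_add, List.map_append, List.reduceOption_append,
    List.map_map]
  congr 1
  · rw [forget_bound α (N := M) (fun k hk => st_spec α k (le_trans hα hk))]
    congr 1
    exact List.map_congr_left fun i hi => ext_agree α M z (List.mem_range.mp hi)
  · have he : ((ext α M z).1 ∘ fun x => M + x) = fun j => z[j]? := by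
      funext j
      have h1 : ¬ M + j < M := by omega
      simp [ext, h1]
    rw [he]
    exact red_getElem z

lemma key1 (α : PSeq A) (β : PSeq B) {M : ℕ} (hα : α.st ≤ M) (hβ : β.st ≤ M)
    (α' : PSeq A) (hagree : ∀ i < M, α.1 i = α'.1 i)
    {z : List A} (hz : α'.forget = α.forget ++ z) :
    gMap (α', β) = gMap (α, β) ++ z.map Sum.inl := by
  set N := max α'.st M with hN
  have hα'N : α'.st ≤ N := le_max_left _ _
  have hMN : M ≤ N := le_max_right _ _
  set L := N - M with hL
  set t := ((List.range L).map (α'.1 ∘ fun x => M + x)).reduceOption with ht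
  have h1 : ((List.range M).map α'.1).reduceOption = α.forget := by
    rw [forget_bound α (N := M) (fun k hk => st_spec α k (le_trans hα hk))]
    congr 1
    exact List.map_congr_left fun i hi => (hagree i (List.mem_range.mp hi)).symm
  have hdec : α'.forget = α.forget ++ t := by
    rw [forget_bound α' (fun k hk => st_spec α' k (le_trans hα'N hk)),
      show N = M + L by omega, List.range_add, List.map_append, List.reduceOption_append,
      List.map_map, h1]
  have htz : t = z := List.append_cancel_left (hdec.symm.trans hz)
  rw [gMap_eq α' β hα'N (le_trans hβ hMN), gMap_eq α β hα hβ,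
    show N = M + L by omega, List.range_add, List.map_append, List.flatten_append, List.map_map]
  congr 1
  · congr 1
    exact List.map_congr_left fun i hi => by rw [hagree i (List.mem_range.mp hi)]
  · have hterm : ((fun j => ((α'.1 j).map Sum.inl).toList ++ ((β.1 j).map Sum.inr).toList) ∘
        fun x => M + x) = fun j => (Option.map Sum.inl ((α'.1 ∘ fun x => M + x) j)).toList := by
      funext j
      have hb : β.1 (M + j) = none := st_spec β _ (le_trans hβ (Nat.le_add_right _ _))
      simp [Function.comp, hb]
    rw [hterm,
      show (fun j => (Option.map Sum.inl ((α'.1 ∘ fun x => M + x) j)).toList)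
        = Option.toList ∘ (Option.map Sum.inl ∘ (α'.1 ∘ fun x => M + x)) from rfl,
      ← List.map_map, ← List.map_map, flatten_toList, List.reduceOption_map, ← ht, htz]

lemma key2 (α : PSeq A) (β : PSeq B) {M : ℕ} (hα : α.st ≤ M) (hβ : β.st ≤ M)
    (β' : PSeq B) (hagree : ∀ i < M, β.1 i = β'.1 i)
    {z : List B} (hz : β'.forget = β.forget ++ z) :
    gMap (α, β') = gMap (α, β) ++ z.map Sum.inr := by
  set N := max β'.st M with hN
  have hβ'N : β'.st ≤ N := le_max_left _ _
  have hMN : M ≤ N := le_max_right _ _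
  set L := N - M with hL
  set t := ((List.range L).map (β'.1 ∘ fun x => M + x)).reduceOption with ht
  have h1 : ((List.range M).map β'.1).reduceOption = β.forget := by
    rw [forget_bound β (N := M) (fun k hk => st_spec β k (le_trans hβ hk))]
    congr 1
    exact List.map_congr_left fun i hi => (hagree i (List.mem_range.mp hi)).symm
  have hdec : β'.forget = β.forget ++ t := by
    rw [forget_bound β' (fun k hk => st_spec β' k (le_trans hβ'N hk)),
      show N = M + L by omega, List.range_add, List.map_append, List.reduceOption_append,
      List.map_map, h1]
  have htz : t = z := List.append_cancel_left (hdec.symm.trans hz)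
  rw [gMap_eq α β' (le_trans hα hMN) hβ'N, gMap_eq α β hα hβ,
    show N = M + L by omega, List.range_add, List.map_append, List.flatten_append, List.map_map]
  congr 1
  · congr 1
    exact List.map_congr_left fun i hi => by rw [hagree i (List.mem_range.mp hi)]
  · have hterm : ((fun j => ((α.1 j).map Sum.inl).toList ++ ((β'.1 j).map Sum.inr).toList) ∘
        fun x => M + x) = fun j => (Option.map Sum.inr ((β'.1 ∘ fun x => M + x) j)).toList := by
      funext j
      have ha : α.1 (M + j) = none := st_spec α _ (le_trans hα (Nat.le_add_right _ _))
      simp [Function.comp, ha]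
    rw [hterm,
      show (fun j => (Option.map Sum.inr ((β'.1 ∘ fun x => M + x) j)).toList)
        = Option.toList ∘ (Option.map Sum.inr ∘ (β'.1 ∘ fun x => M + x)) from rfl,
      ← List.map_map, ← List.map_map, flatten_toList, List.reduceOption_map, ← ht, htz]

lemma mem_prodTau1 {X₁ X₂ : Type} (τ₁ : X₁ → Filter X₁) (p : X₁ × X₂) (U : Set (X₁ × X₂)) :
    U ∈ prodTau1 τ₁ p ↔ (fun x => (x, p.2)) ⁻¹' U ∈ τ₁ p.1 := Iff.rfl

lemma mem_prodTau2 {X₁ X₂ : Type} (τ₂ : X₂ → Filter X₂) (p : X₁ × X₂) (U : Set (X₁ × X₂)) :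
    U ∈ prodTau2 τ₂ p ↔ (fun y => (p.1, y)) ⁻¹' U ∈ τ₂ p.2 := Iff.rfl

lemma mem_nOfK {W : Type} (R : W → W → Prop) (w : W) (s : Set W) :
    s ∈ nOfK R w ↔ {v | R w v} ⊆ s := Filter.mem_principal

/-- Witness sequences for surjectivity. -/
def wseqL (w : List (A ⊕ B)) : PSeq A :=
  ⟨fun j => (w[j]?).bind Sum.getLeft?, w.length, fun k hk => by
    show (w[k]?).bind Sum.getLeft? = none
    rw [List.getElem?_eq_none hk]; rfl⟩

def wseqR (w : List (A ⊕ B)) : PSeq B :=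
  ⟨fun j => (w[j]?).bind Sum.getRight?, w.length, fun k hk => by
    show (w[k]?).bind Sum.getRight? = none
    rw [List.getElem?_eq_none hk]; rfl⟩

lemma gMap_wseq (w : List (A ⊕ B)) : gMap (wseqL w, wseqR w) = w := by
  have hsl : (wseqL w : PSeq A).st ≤ w.length :=
    st_le _ (fun k hk => by show (w[k]?).bind Sum.getLeft? = none; rw [List.getElem?_eq_none hk]; rfl)
  have hsr : (wseqR w : PSeq B).st ≤ w.length :=
    st_le _ (fun k hk => by show (w[k]?).bind Sum.getRight? = none; rw [List.getElem?_eq_none hk]; rfl)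
  rw [gMap_eq _ _ hsl hsr]
  conv_rhs => rw [← flatten_getElem w]
  congr 1
  refine List.map_congr_left fun j hj => ?_
  have hj' : j < w.length := List.mem_range.mp hj
  show ((((w[j]?).bind Sum.getLeft?).map Sum.inl).toList)
      ++ ((((w[j]?).bind Sum.getRight?).map Sum.inr).toList) = (w[j]?).toList
  rw [List.getElem?_eq_getElem hj']
  rcases w[j] with a | b <;> simp

end GAux

theorem gMap_boundedMorphism' (A B : Type) [Nonempty A] [Nonempty B]
    (k₁ k₂ : TreeKind) :
    IsNdMorphism
      ![prodTau1 (nOmega (treeRel A k₁)), prodTau2 (nOmega (treeRel B k₂))]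
      ![nOfK (prodRel1 A B k₁), nOfK (prodRel2 A B k₂)]
      gMap := by
  refine ⟨fun w => ⟨(GAux.wseqL w, GAux.wseqR w), GAux.gMap_wseq w⟩, ?_⟩
  intro i p
  obtain ⟨α, β⟩ := p
  fin_cases i
  · simp only [Fin.mk_zero, Matrix.cons_val_zero]
    constructor
    · intro U hU
      rw [GAux.mem_prodTau1, GAux.mem_nOmega] at hU
      obtain ⟨k₀, hk₀⟩ := hU
      rw [GAux.mem_nOfK]
      rintro v ⟨z, hz, rfl⟩
      set M := max (max k₀ α.st) β.st with hM
      have hαM : α.st ≤ M := le_trans (le_max_right _ _) (le_max_left _ _)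
      have hβM : β.st ≤ M := le_max_right _ _
      set α' := GAux.ext α M z with hα'
      have hf : α'.forget = α.forget ++ z := GAux.forget_ext α hαM z
      have hmem : α' ∈ Unbhd (treeRel A k₁) k₀ α :=
        ⟨fun i hi => (GAux.ext_agree α M z (lt_of_lt_of_le hi (le_max_left _ _))).symm,
         by rw [hf]; exact GAux.treeRel_append hz⟩
      refine ⟨(α', β), hk₀ hmem, ?_⟩
      exact GAux.key1 α β hαM hβM α' (fun i hi => (GAux.ext_agree α M z hi).symm) hf
    · intro V hV
      rw [GAux.mem_nOfK] at hV
      refine ⟨(fun x => (x, β)) '' Unbhd (treeRel A k₁) β.st α, ?_, ?_⟩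
      · rw [GAux.mem_prodTau1, GAux.mem_nOmega]
        exact ⟨β.st, fun x hx => Set.mem_image_of_mem _ hx⟩
      · rintro v ⟨u, ⟨α', hα', rfl⟩, rfl⟩
        obtain ⟨hagree, hrel⟩ := hα'
        obtain ⟨z, hz0, hzeq⟩ := GAux.treeRel_dest hrel
        refine hV ⟨z, hz0, ?_⟩
        exact GAux.key1 α β (le_max_right _ _) (le_max_left _ _) α' hagree hzeq
  · simp only [Fin.mk_one, Matrix.cons_val_one, Matrix.head_cons, Matrix.cons_val_zero]
    constructor
    · intro U hU
      rw [GAux.mem_prodTau2, GAux.mem_nOmega] at hU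
      obtain ⟨k₀, hk₀⟩ := hU
      rw [GAux.mem_nOfK]
      rintro v ⟨z, hz, rfl⟩
      set M := max (max k₀ β.st) α.st with hM
      have hβM : β.st ≤ M := le_trans (le_max_right _ _) (le_max_left _ _)
      have hαM : α.st ≤ M := le_max_right _ _
      set β' := GAux.ext β M z with hβ'
      have hf : β'.forget = β.forget ++ z := GAux.forget_ext β hβM z
      have hmem : β' ∈ Unbhd (treeRel B k₂) k₀ β :=
        ⟨fun i hi => (GAux.ext_agree β M z (lt_of_lt_of_le hi (le_max_left _ _))).symm,
         by rw [hf]; exact GAux.treeRel_append hz⟩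
      refine ⟨(α, β'), hk₀ hmem, ?_⟩
      exact GAux.key2 α β hαM hβM β' (fun i hi => (GAux.ext_agree β M z hi).symm) hf
    · intro V hV
      rw [GAux.mem_nOfK] at hV
      refine ⟨(fun y => (α, y)) '' Unbhd (treeRel B k₂) α.st β, ?_, ?_⟩
      · rw [GAux.mem_prodTau2, GAux.mem_nOmega]
        exact ⟨α.st, fun y hy => Set.mem_image_of_mem _ hy⟩
      · rintro v ⟨u, ⟨β', hβ', rfl⟩, rfl⟩
        obtain ⟨hagree, hrel⟩ := hβ'
        obtain ⟨z, hz0, hzeq⟩ := GAux.treeRel_dest hrel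
        refine hV ⟨z, hz0, ?_⟩
        exact GAux.key2 α β (le_max_left _ _) (le_max_right _ _) β' hagree hzeq

/-- The zero-deleting interleaving map `g` is a bounded morphism from
the neighborhood 2-frame `N_ω(F₁) × N_ω(F₂)` onto the neighborhood 2-frame
`N(F₁ ⊗ F₂)`. -/
theorem gMap_boundedMorphism (A B : Type) [Nonempty A] [Nonempty B]
    (k₁ k₂ : TreeKind) :
    IsNdMorphism
      ![prodTau1 (nOmega (treeRel A k₁)), prodTau2 (nOmega (treeRel B k₂))]
      ![nOfK (prodRel1 A B k₁), nOfK (prodRel2 A B k₂)]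
      gMap := gMap_boundedMorphism' A B k₁ k₂
end
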